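/- Let B ⊆ ℕ^n be the set of bases of a discrete polymatroid, and let a, b, c, d be indices in [1,n] with c < a < b < d. Let C = { e_i + e_j : a ≤ i ≤ b, c ≤ j ≤ d } ⊆ ℕ^n (the exponent vectors of the generators of the transversal ideal P_{[a,b]}P_{[c,d]}). Then the Minkowski sum B + C = { u + v : u ∈ B, v ∈ C } satisfies neither the right-sided nor the left-sided strong symmetric exchange property. -/

import Mathlib

open Finset

/-- `u - e i + e j` (exchange move on integer vectors). -/
def exch {n : ℕ} (u : Fin n → ℕ) (i j : Fin n) : Fin n → ℕ :=
  fun l => if l = i then u l - 1 else if l = j then u l + 1 else u l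

/-- Symmetric exchange property for a set of vectors. -/
def SymExch {n : ℕ} (B : Set (Fin n → ℕ)) : Prop :=
  ∀ u ∈ B, ∀ v ∈ B, ∀ i : Fin n, v i < u i →
    ∃ j : Fin n, u j < v j ∧ exch u i j ∈ B ∧ exch v j i ∈ B

/-- Left-sided strong symmetric exchange property. -/
def LeftSSEP {n : ℕ} (B : Set (Fin n → ℕ)) : Prop :=
  ∀ u ∈ B, ∀ v ∈ B, ∀ i : Fin n, v i < u i →
    (∑ j ∈ Finset.Iio i, u j) < (∑ j ∈ Finset.Iio i, v j) →
    ∃ j : Fin n, j < i ∧ u j < v j ∧ exch u i j ∈ B ∧ exch v j i ∈ B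

/-- Right-sided strong symmetric exchange property. -/
def RightSSEP {n : ℕ} (B : Set (Fin n → ℕ)) : Prop :=
  ∀ u ∈ B, ∀ v ∈ B, ∀ i : Fin n, v i < u i →
    (∑ j ∈ Finset.Ioi i, u j) < (∑ j ∈ Finset.Ioi i, v j) →
    ∃ j : Fin n, i < j ∧ u j < v j ∧ exch u i j ∈ B ∧ exch v j i ∈ B

/-- helper: exchanging `p → r` in `u0 + e_p + e_q` yields `u0 + e_q + e_r`. -/
lemma exch_shift {n : ℕ} (u0 : Fin n → ℕ) (p q r : Fin n)
    (hpq : p ≠ q) (hpr : p ≠ r) (hqr : q ≠ r) :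
    exch (fun l => u0 l + ((if l = p then 1 else 0) + (if l = q then 1 else 0))) p r
      = fun l => u0 l + ((if l = q then 1 else 0) + (if l = r then 1 else 0)) := by
  funext l
  simp only [exch]
  rcases eq_or_ne l p with h1 | h1 <;> rcases eq_or_ne l q with h2 | h2 <;>
    rcases eq_or_ne l r with h3 | h3 <;> simp_all

/-- the Minkowski sum of a polymatroid base set with the base set
of the transversal ideal `P_{[a,b]} P_{[c,d]}` (with `c < a < b < d`) satisfies
neither one-sided strong symmetric exchange property. -/
theorem minkowski_sum_not_oneSided_SSEP
    {n : ℕ} (B : Set (Fin n → ℕ))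
    (hfin : B.Finite) (hne : B.Nonempty)
    (hmod : ∀ u ∈ B, ∀ v ∈ B, ∑ i, u i = ∑ i, v i)
    (hex : SymExch B)
    (a b c d : Fin n) (hca : c < a) (hab : a < b) (hbd : b < d)
    (C : Set (Fin n → ℕ))
    (hC : C = { w : Fin n → ℕ | ∃ i j : Fin n, a ≤ i ∧ i ≤ b ∧ c ≤ j ∧ j ≤ d ∧
      w = fun l => (if l = i then 1 else 0) + (if l = j then 1 else 0) }) :
    ¬ RightSSEP { w : Fin n → ℕ | ∃ u ∈ B, ∃ v ∈ C, w = u + v } ∧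
    ¬ LeftSSEP { w : Fin n → ℕ | ∃ u ∈ B, ∃ v ∈ C, w = u + v } := by
  have hcb : c < b := hca.trans hab
  have had : a < d := hab.trans hbd
  have hcd : c < d := hca.trans had
  have hab' : a ≠ b := ne_of_lt hab
  have hca' : c ≠ a := ne_of_lt hca
  have hcb' : c ≠ b := ne_of_lt hcb
  have hcd' : c ≠ d := ne_of_lt hcd
  have had' : a ≠ d := ne_of_lt had
  have hbd' : b ≠ d := ne_of_lt hbd
  obtain ⟨u0, hu0B, hmax⟩ : ∃ u0 ∈ B, ∀ u ∈ B, u c + u d ≤ u0 c + u0 d := by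
    obtain ⟨u0, hu0, hm⟩ := hfin.toFinset.exists_max_image (fun u => u c + u d)
      (hfin.toFinset_nonempty.mpr hne)
    exact ⟨u0, hfin.mem_toFinset.mp hu0, fun u hu => hm u (hfin.mem_toFinset.mpr hu)⟩
  have key : (fun l => u0 l + ((if l = c then 1 else 0) + (if l = d then 1 else 0))) ∉
      { w : Fin n → ℕ | ∃ u ∈ B, ∃ v ∈ C, w = u + v } := by
    rintro ⟨u', hu', w, hw, heq⟩
    rw [hC] at hw
    obtain ⟨i, j, hai, hib, hcj, hjd, rfl⟩ := hw
    have hc := congrFun heq c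
    have hd := congrFun heq d
    have hci : c ≠ i := ne_of_lt (lt_of_lt_of_le hca hai)
    have hdi : d ≠ i := (ne_of_lt (lt_of_le_of_lt hib hbd)).symm
    have hm := hmax u' hu'
    simp only [Pi.add_apply, if_pos rfl, if_true, if_neg hcd', if_neg (Ne.symm hcd'), if_neg hci, if_neg hdi] at hc hd
    rcases eq_or_ne c j with h1 | h1 <;> rcases eq_or_ne d j with h2 | h2
    · exact absurd (h1.trans h2.symm) hcd'
    · rw [if_neg h2] at hd; rw [if_pos h1] at hc; omega
    · rw [if_pos h2] at hd; rw [if_neg h1] at hc; omega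
    · rw [if_neg h2] at hd; rw [if_neg h1] at hc; omega
  set U : Fin n → ℕ := fun l => u0 l + ((if l = b then 1 else 0) + (if l = c then 1 else 0))
    with hUdef
  set V : Fin n → ℕ := fun l => u0 l + ((if l = a then 1 else 0) + (if l = d then 1 else 0))
    with hVdef
  have hU : U ∈ { w : Fin n → ℕ | ∃ u ∈ B, ∃ v ∈ C, w = u + v } :=
    ⟨u0, hu0B, _, by rw [hC]; exact ⟨b, c, le_of_lt hab, le_refl b, le_refl c, le_of_lt hcd, rfl⟩,
      rfl⟩
  have hV : V ∈ { w : Fin n → ℕ | ∃ u ∈ B, ∃ v ∈ C, w = u + v } :=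
    ⟨u0, hu0B, _, by rw [hC]; exact ⟨a, d, le_refl a, le_of_lt hab, le_of_lt hcd, le_refl d, rfl⟩,
      rfl⟩
  have hsum : ∀ (x : Fin n) (s : Finset (Fin n)),
      (∑ j ∈ s, (if j = x then (1:ℕ) else 0)) = if x ∈ s then 1 else 0 :=
    fun x s => Finset.sum_ite_eq' s x (fun _ => 1)
  constructor
  · intro h
    have hVb : V b < U b := by simp [hUdef, hVdef, hab'.symm, hbd', hcb'.symm]
    have htail : (∑ j ∈ Finset.Ioi b, U j) < (∑ j ∈ Finset.Ioi b, V j) := by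
      simp only [hUdef, hVdef, Finset.sum_add_distrib, hsum, Finset.mem_Ioi]
      simp [lt_irrefl b, not_lt.mpr (le_of_lt hcb), not_lt.mpr (le_of_lt hab), hbd]
    obtain ⟨j, hbj, hlt, hm1, _⟩ := h U hU V hV b hVb htail
    have hjd : j = d := by
      by_contra hne
      have hjb : j ≠ b := ne_of_gt hbj
      have hjc : j ≠ c := ne_of_gt (hcb.trans hbj)
      have hja : j ≠ a := ne_of_gt (hab.trans hbj)
      simp [hUdef, hVdef, hjb, hjc, hja, hne] at hlt
    rw [hjd] at hm1
    rw [hUdef, exch_shift u0 b c d hcb'.symm hbd' hcd'] at hm1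
    exact key hm1
  · intro h
    have hVa : U a < V a := by simp [hUdef, hVdef, hab', hca'.symm, had']
    have hhead : (∑ j ∈ Finset.Iio a, V j) < (∑ j ∈ Finset.Iio a, U j) := by
      simp only [hUdef, hVdef, Finset.sum_add_distrib, hsum, Finset.mem_Iio]
      simp [lt_irrefl a, hca, not_lt.mpr (le_of_lt hab), not_lt.mpr (le_of_lt had)]
    obtain ⟨j, hja, hlt, hm1, _⟩ := h V hV U hU a hVa hhead
    have hjc : j = c := by
      by_contra hne
      have hja' : j ≠ a := ne_of_lt hja
      have hjb : j ≠ b := ne_of_lt (hja.trans hab)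
      have hjd : j ≠ d := ne_of_lt (hja.trans had)
      simp [hUdef, hVdef, hja', hjb, hjd, hne] at hlt
    rw [hjc] at hm1
    rw [hVdef, exch_shift u0 a d c had' hca'.symm hcd'.symm] at hm1
    apply key
    have : (fun l => u0 l + ((if l = d then 1 else 0) + (if l = c then 1 else 0)))
        = fun l => u0 l + ((if l = c then 1 else 0) + (if l = d then 1 else 0)) := by
      funext l; rw [add_comm (if l = d then (1:ℕ) else 0)]
    rwa [this] at hm1
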